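/- If an intermediate first-order logic L admits structural Skolemization (i.e., for every closed formula A, L proves A if and only if L proves the structural Skolemization of A), then L contains the quantifier shift principles CD, ED, and SW. -/

import Mathlib

/-- First-order terms: variables and function symbols (indexed by naturals)
applied to lists of terms. Constants are 0-ary function symbols. -/
inductive Term : Type
  | var : ℕ → Term
  | func : ℕ → List Term → Term

mutual
  /-- Substitution of the term `s` for the variable `x` in a term. -/
  def Term.subst (x : ℕ) (s : Term) : Term → Term
    | .var y => if y = x then s else .var y
    | .func f ts => .func f (Term.substList x s ts)
  def Term.substList (x : ℕ) (s : Term) : List Term → List Term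
    | [] => []
    | t :: ts => Term.subst x s t :: Term.substList x s ts
end

/-- First-order formulas of the language of `IQC`. -/
inductive Fml : Type
  | bot : Fml
  | top : Fml
  | rel : ℕ → List Term → Fml
  | and : Fml → Fml → Fml
  | or : Fml → Fml → Fml
  | imp : Fml → Fml → Fml
  | all : ℕ → Fml → Fml
  | ex : ℕ → Fml → Fml

/-- Substitution of a term for a (free) variable in a formula. -/
def Fml.subst (x : ℕ) (s : Term) : Fml → Fml
  | .bot => .bot
  | .top => .top
  | .rel r ts => .rel r (Term.substList x s ts)
  | .and A B => .and (A.subst x s) (B.subst x s)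
  | .or A B => .or (A.subst x s) (B.subst x s)
  | .imp A B => .imp (A.subst x s) (B.subst x s)
  | .all y A => if y = x then .all y A else .all y (A.subst x s)
  | .ex y A => if y = x then .ex y A else .ex y (A.subst x s)

/-- The variable `x` occurs in a term. -/
inductive Term.HasVar (x : ℕ) : Term → Prop
  | var : Term.HasVar x (.var x)
  | func {f : ℕ} {ts : List Term} {t : Term} :
      t ∈ ts → Term.HasVar x t → Term.HasVar x (.func f ts)

/-- The variable `x` occurs free in a formula. -/
inductive Fml.FreeIn (x : ℕ) : Fml → Prop
  | rel {r ts t} : t ∈ ts → Term.HasVar x t → Fml.FreeIn x (.rel r ts)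
  | andL {A B} : FreeIn x A → FreeIn x (.and A B)
  | andR {A B} : FreeIn x B → FreeIn x (.and A B)
  | orL {A B} : FreeIn x A → FreeIn x (.or A B)
  | orR {A B} : FreeIn x B → FreeIn x (.or A B)
  | impL {A B} : FreeIn x A → FreeIn x (.imp A B)
  | impR {A B} : FreeIn x B → FreeIn x (.imp A B)
  | all {y A} : y ≠ x → FreeIn x A → FreeIn x (.all y A)
  | ex {y A} : y ≠ x → FreeIn x A → FreeIn x (.ex y A)

/-- The function symbol `f` occurs in a term. -/
inductive Term.HasFunc (f : ℕ) : Term → Prop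
  | self {ts} : Term.HasFunc f (.func f ts)
  | arg {g ts t} : t ∈ ts → Term.HasFunc f t → Term.HasFunc f (.func g ts)

/-- The function symbol `f` occurs in a formula. -/
inductive Fml.HasFunc (f : ℕ) : Fml → Prop
  | rel {r ts t} : t ∈ ts → Term.HasFunc f t → Fml.HasFunc f (.rel r ts)
  | andL {A B} : HasFunc f A → HasFunc f (.and A B)
  | andR {A B} : HasFunc f B → HasFunc f (.and A B)
  | orL {A B} : HasFunc f A → HasFunc f (.or A B)
  | orR {A B} : HasFunc f B → HasFunc f (.or A B)
  | impL {A B} : HasFunc f A → HasFunc f (.imp A B)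
  | impR {A B} : HasFunc f B → HasFunc f (.imp A B)
  | all {y A} : HasFunc f A → HasFunc f (.all y A)
  | ex {y A} : HasFunc f A → HasFunc f (.ex y A)

/-- Hilbert-style derivability for intuitionistic predicate logic `IQC`
from an extra set of axioms `L`.  `Deriv ∅` is provability in `IQC`. -/
inductive Deriv (L : Set Fml) : Fml → Prop
  | ax {A} : A ∈ L → Deriv L A
  | impK {A B} : Deriv L (.imp A (.imp B A))
  | impS {A B C} :
      Deriv L (.imp (.imp A (.imp B C)) (.imp (.imp A B) (.imp A C)))
  | andI {A B} : Deriv L (.imp A (.imp B (.and A B)))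
  | andE1 {A B} : Deriv L (.imp (.and A B) A)
  | andE2 {A B} : Deriv L (.imp (.and A B) B)
  | orI1 {A B} : Deriv L (.imp A (.or A B))
  | orI2 {A B} : Deriv L (.imp B (.or A B))
  | orE {A B C} :
      Deriv L (.imp (.imp A C) (.imp (.imp B C) (.imp (.or A B) C)))
  | botE {A} : Deriv L (.imp .bot A)
  | topI : Deriv L .top
  | allE {x A} (t : Term) : Deriv L (.imp (.all x A) (A.subst x t))
  | exI {x A} (t : Term) : Deriv L (.imp (A.subst x t) (.ex x A))
  | allShift {x A B} : ¬ Fml.FreeIn x B →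
      Deriv L (.imp (.all x (.imp B A)) (.imp B (.all x A)))
  | exShift {x A B} : ¬ Fml.FreeIn x B →
      Deriv L (.imp (.all x (.imp A B)) (.imp (.ex x A) B))
  | mp {A B} : Deriv L (.imp A B) → Deriv L A → Deriv L B
  | gen {x A} : Deriv L A → Deriv L (.all x A)

/-- Size of a formula (number of nodes), used as fuel for Skolemization. -/
def Fml.size : Fml → ℕ
  | .bot => 1
  | .top => 1
  | .rel _ _ => 1
  | .and A B => A.size + B.size + 1
  | .or A B => A.size + B.size + 1
  | .imp A B => A.size + B.size + 1
  | .all _ A => A.size + 1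
  | .ex _ A => A.size + 1

/-- All function symbols occurring in a term have index `< n`. -/
inductive Term.FuncBelow (n : ℕ) : Term → Prop
  | var (x) : Term.FuncBelow n (.var x)
  | func {f ts} : f < n → (∀ t ∈ ts, Term.FuncBelow n t) →
      Term.FuncBelow n (.func f ts)

/-- All function symbols occurring in a formula have index `< n`
(so that symbols with index `≥ n` are fresh for it). -/
def Fml.FuncBelow (n : ℕ) : Fml → Prop
  | .bot => True
  | .top => True
  | .rel _ ts => ∀ t ∈ ts, Term.FuncBelow n t
  | .and A B => A.FuncBelow n ∧ B.FuncBelow n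
  | .or A B => A.FuncBelow n ∧ B.FuncBelow n
  | .imp A B => A.FuncBelow n ∧ B.FuncBelow n
  | .all _ A => A.FuncBelow n
  | .ex _ A => A.FuncBelow n

/-- One-pass structural Skolemization.  `skAux fuel pos xs c A` Skolemizes `A`
occurring with polarity `pos` (`true` = positive), in the scope of the weakly
quantified variables `xs`, using fresh Skolem function symbols `c, c+1, …`;
it returns the Skolemized formula together with the next fresh symbol.
Strong quantifiers (positive `∀`, negative `∃`) are removed, the bound
variable being replaced by a fresh Skolem function applied to the weakly
quantified variables of the scope. -/
def skAux : ℕ → Bool → List ℕ → ℕ → Fml → Fml × ℕ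
  | 0, _, _, c, A => (A, c)
  | Nat.succ n, pos, xs, c, A =>
    match A with
    | .bot => (.bot, c)
    | .top => (.top, c)
    | .rel r ts => (.rel r ts, c)
    | .and A₁ A₂ =>
        let p₁ := skAux n pos xs c A₁
        let p₂ := skAux n pos xs p₁.2 A₂
        (.and p₁.1 p₂.1, p₂.2)
    | .or A₁ A₂ =>
        let p₁ := skAux n pos xs c A₁
        let p₂ := skAux n pos xs p₁.2 A₂
        (.or p₁.1 p₂.1, p₂.2)
    | .imp A₁ A₂ =>
        let p₁ := skAux n (!pos) xs c A₁
        let p₂ := skAux n pos xs p₁.2 A₂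
        (.imp p₁.1 p₂.1, p₂.2)
    | .all y A₁ =>
        if pos then
          skAux n pos xs (c + 1) (A₁.subst y (.func c (xs.map Term.var)))
        else
          let p := skAux n pos (xs ++ [y]) c A₁
          (.all y p.1, p.2)
    | .ex y A₁ =>
        if pos then
          let p := skAux n pos (xs ++ [y]) c A₁
          (.ex y p.1, p.2)
        else
          skAux n pos xs (c + 1) (A₁.subst y (.func c (xs.map Term.var)))

/-- The structural Skolem form `A^S` of `A`, using the symbols `c, c+1, …`
(which are fresh whenever `Fml.FuncBelow c A`) as Skolem functions. -/
def skolemizeFrom (c : ℕ) (A : Fml) : Fml :=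
  (skAux A.size true [] c A).1

/-- A formula is closed if it has no free variables. -/
def Fml.Closed (A : Fml) : Prop := ∀ x, ¬ Fml.FreeIn x A

/-- Classical predicate logic: `IQC` plus all instances of double negation
elimination. -/
def CQC : Set Fml :=
  {A | Deriv {B | ∃ C : Fml, B = .imp (.imp (.imp C .bot) .bot) C} A}

/-- An intermediate first-order logic: a set of formulas between `IQC` and
`CQC`, closed under the rules of `IQC`. -/
def IsIntermediate (L : Set Fml) : Prop :=
  (∀ A, Deriv ∅ A → A ∈ L) ∧ (∀ A ∈ L, A ∈ CQC) ∧ (∀ A, Deriv L A → A ∈ L)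

-- ===================== auxiliary development =====================

/-! ### Term-level substitution lemmas -/

mutual
theorem tsubst_self (x : ℕ) : ∀ t : Term, Term.subst x (.var x) t = t
  | .var y => by by_cases h : y = x <;> simp [Term.subst, h]
  | .func f ts => by simp [Term.subst, tsubstList_self x ts]
theorem tsubstList_self (x : ℕ) : ∀ ts : List Term, Term.substList x (.var x) ts = ts
  | [] => rfl
  | t :: ts => by simp [Term.substList, tsubst_self x t, tsubstList_self x ts]
end

mutual
theorem tsubst_nv (x : ℕ) (s : Term) : ∀ t : Term, ¬ Term.HasVar x t → Term.subst x s t = t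
  | .var y, h => by
      have hy : y ≠ x := fun e => h (by rw [e]; exact .var)
      simp [Term.subst, hy]
  | .func f ts, h => by
      simp only [Term.subst, Term.func.injEq, true_and]
      exact tsubstList_nv x s ts (fun u hu hv => h (.func hu hv))
theorem tsubstList_nv (x : ℕ) (s : Term) : ∀ ts : List Term,
    (∀ u ∈ ts, ¬ Term.HasVar x u) → Term.substList x s ts = ts
  | [], _ => rfl
  | u :: ts, h => by
      simp only [Term.substList, List.cons.injEq]
      exact ⟨tsubst_nv x s u (h u (.head _)), tsubstList_nv x s ts (fun v hv => h v (.tail _ hv))⟩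
end

mutual
theorem thv_subst (x : ℕ) (s : Term) (y : ℕ) :
    ∀ t : Term, Term.HasVar y (Term.subst x s t) → Term.HasVar y t ∨ Term.HasVar y s
  | .var z, h => by
      by_cases e : z = x
      · simp only [Term.subst, if_pos e] at h; exact .inr h
      · simp only [Term.subst, if_neg e] at h
        cases h; exact .inl .var
  | .func f ts, h => by
      simp only [Term.subst] at h
      cases h with
      | func hmem hv =>
          rcases thvList_subst x s y ts _ hmem hv with ⟨t, ht, hv'⟩ | h1
          · exact .inl (.func ht hv')
          · exact .inr h1
theorem thvList_subst (x : ℕ) (s : Term) (y : ℕ) :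
    ∀ (ts : List Term) (u : Term), u ∈ Term.substList x s ts → Term.HasVar y u →
      (∃ t ∈ ts, Term.HasVar y t) ∨ Term.HasVar y s
  | [], u, hu, _ => by simp [Term.substList] at hu
  | t :: ts, u, hu, hv => by
      simp only [Term.substList] at hu
      cases hu with
      | head =>
          rcases thv_subst x s y t hv with h1 | h1
          · exact .inl ⟨t, List.mem_cons_self (a := t) (l := ts), h1⟩
          · exact .inr h1
      | tail _ h =>
          rcases thvList_subst x s y ts u h hv with ⟨w, hw, hv'⟩ | h1
          · exact .inl ⟨w, List.mem_cons_of_mem _ hw, hv'⟩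
          · exact .inr h1
end

/-! ### Formula-level substitution lemmas -/

theorem fml_subst_self (x : ℕ) : ∀ A : Fml, A.subst x (.var x) = A := by
  intro A; induction A with
  | bot => rfl
  | top => rfl
  | rel r ts => simp [Fml.subst, tsubstList_self]
  | and A B ihA ihB => simp [Fml.subst, ihA, ihB]
  | or A B ihA ihB => simp [Fml.subst, ihA, ihB]
  | imp A B ihA ihB => simp [Fml.subst, ihA, ihB]
  | all y A ih => by_cases h : y = x <;> simp [Fml.subst, h, ih]
  | ex y A ih => by_cases h : y = x <;> simp [Fml.subst, h, ih]

theorem size_subst (x : ℕ) (s : Term) : ∀ A : Fml, (A.subst x s).size = A.size := by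
  intro A; induction A with
  | bot => rfl
  | top => rfl
  | rel r ts => simp [Fml.subst, Fml.size]
  | and A B ihA ihB => simp [Fml.subst, Fml.size, ihA, ihB]
  | or A B ihA ihB => simp [Fml.subst, Fml.size, ihA, ihB]
  | imp A B ihA ihB => simp [Fml.subst, Fml.size, ihA, ihB]
  | all y A ih => by_cases h : y = x <;> simp [Fml.subst, h, Fml.size, ih]
  | ex y A ih => by_cases h : y = x <;> simp [Fml.subst, h, Fml.size, ih]

theorem subst_notFree {x : ℕ} {A : Fml} (s : Term) (h : ¬ Fml.FreeIn x A) : A.subst x s = A := by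
  induction A with
  | bot => rfl
  | top => rfl
  | rel r ts =>
      simp only [Fml.subst, Fml.rel.injEq, true_and]
      exact tsubstList_nv x s ts (fun u hu hv => h (.rel hu hv))
  | and A B ihA ihB =>
      simp [Fml.subst, ihA (fun h' => h (.andL h')), ihB (fun h' => h (.andR h'))]
  | or A B ihA ihB =>
      simp [Fml.subst, ihA (fun h' => h (.orL h')), ihB (fun h' => h (.orR h'))]
  | imp A B ihA ihB =>
      simp [Fml.subst, ihA (fun h' => h (.impL h')), ihB (fun h' => h (.impR h'))]
  | all y A ih =>
      by_cases e : y = x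
      · simp [Fml.subst, e]
      · simp [Fml.subst, e, ih (fun h' => h (.all e h'))]
  | ex y A ih =>
      by_cases e : y = x
      · simp [Fml.subst, e]
      · simp [Fml.subst, e, ih (fun h' => h (.ex e h'))]

theorem freeIn_subst {y x : ℕ} {s : Term} :
    ∀ {A : Fml}, Fml.FreeIn y (A.subst x s) → Fml.FreeIn y A ∨ Term.HasVar y s := by
  intro A
  induction A with
  | bot => intro h; cases h
  | top => intro h; cases h
  | rel r ts =>
      intro h
      cases h with
      | rel hu hv =>
          rcases thvList_subst x s y ts _ hu hv with ⟨t, ht, hv'⟩ | h1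
          · exact .inl (.rel ht hv')
          · exact .inr h1
  | and A B ihA ihB =>
      intro h
      cases h with
      | andL h' => rcases ihA h' with h1 | h1; exacts [.inl (.andL h1), .inr h1]
      | andR h' => rcases ihB h' with h1 | h1; exacts [.inl (.andR h1), .inr h1]
  | or A B ihA ihB =>
      intro h
      cases h with
      | orL h' => rcases ihA h' with h1 | h1; exacts [.inl (.orL h1), .inr h1]
      | orR h' => rcases ihB h' with h1 | h1; exacts [.inl (.orR h1), .inr h1]
  | imp A B ihA ihB =>
      intro h
      cases h with
      | impL h' => rcases ihA h' with h1 | h1; exacts [.inl (.impL h1), .inr h1]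
      | impR h' => rcases ihB h' with h1 | h1; exacts [.inl (.impR h1), .inr h1]
  | all z A ih =>
      intro h
      by_cases e : z = x
      · rw [Fml.subst, if_pos e] at h; exact .inl h
      · rw [Fml.subst, if_neg e] at h
        cases h with
        | all hne h' => rcases ih h' with h1 | h1; exacts [.inl (.all hne h1), .inr h1]
  | ex z A ih =>
      intro h
      by_cases e : z = x
      · rw [Fml.subst, if_pos e] at h; exact .inl h
      · rw [Fml.subst, if_neg e] at h
        cases h with
        | ex hne h' => rcases ih h' with h1 | h1; exacts [.inl (.ex hne h1), .inr h1]

theorem size_pos : ∀ A : Fml, 1 ≤ A.size := by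
  intro A; cases A <;> simp [Fml.size]

/-! ### Free variables as a list -/

mutual
def tfv : Term → List ℕ
  | .var x => [x]
  | .func _ ts => tfvList ts
def tfvList : List Term → List ℕ
  | [] => []
  | t :: ts => tfv t ++ tfvList ts
end

def ffv : Fml → List ℕ
  | .bot => []
  | .top => []
  | .rel _ ts => tfvList ts
  | .and A B => ffv A ++ ffv B
  | .or A B => ffv A ++ ffv B
  | .imp A B => ffv A ++ ffv B
  | .all _ A => ffv A
  | .ex _ A => ffv A

theorem tfv_sublist {t : Term} {ts : List Term} (h : t ∈ ts) : ∀ x ∈ tfv t, x ∈ tfvList ts := by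
  induction h with
  | head => intro x hx; simp [tfvList, hx]
  | tail _ _ ih => intro x hx; simp [tfvList]; exact .inr (ih x hx)

theorem thv_fv {x : ℕ} {t : Term} (h : Term.HasVar x t) : x ∈ tfv t := by
  induction h with
  | var => simp [tfv]
  | func hmem _ ih => exact tfv_sublist hmem x ih

theorem ffv_sound {x : ℕ} {A : Fml} (h : Fml.FreeIn x A) : x ∈ ffv A := by
  induction h with
  | rel hu hv => exact tfv_sublist hu x (thv_fv hv)
  | andL _ ih => simp [ffv]; exact .inl ih
  | andR _ ih => simp [ffv]; exact .inr ih
  | orL _ ih => simp [ffv]; exact .inl ih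
  | orR _ ih => simp [ffv]; exact .inr ih
  | impL _ ih => simp [ffv]; exact .inl ih
  | impR _ ih => simp [ffv]; exact .inr ih
  | all _ _ ih => simpa [ffv] using ih
  | ex _ _ ih => simpa [ffv] using ih

/-! ### Bounds on function symbols -/

mutual
def tbnd : Term → ℕ
  | .var _ => 0
  | .func f ts => max (f + 1) (tbndList ts)
def tbndList : List Term → ℕ
  | [] => 0
  | t :: ts => max (tbnd t) (tbndList ts)
end

def fbnd : Fml → ℕ
  | .bot => 0
  | .top => 0
  | .rel _ ts => tbndList ts
  | .and A B => max (fbnd A) (fbnd B)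
  | .or A B => max (fbnd A) (fbnd B)
  | .imp A B => max (fbnd A) (fbnd B)
  | .all _ A => fbnd A
  | .ex _ A => fbnd A

theorem tfb_mono {m n : ℕ} (h : m ≤ n) : ∀ {t : Term}, Term.FuncBelow m t → Term.FuncBelow n t := by
  intro t ht
  induction ht with
  | var x => exact .var x
  | func hf _ ih => exact .func (lt_of_lt_of_le hf h) ih

mutual
theorem tbnd_below : ∀ t : Term, Term.FuncBelow (tbnd t) t
  | .var x => .var x
  | .func f ts => by
      rw [tbnd]
      exact .func (lt_of_lt_of_le (Nat.lt_succ_self f) (le_max_left _ _))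
        (fun t ht => tfb_mono (le_max_right _ _) (tbndList_below ts t ht))
theorem tbndList_below : ∀ ts : List Term, ∀ t ∈ ts, Term.FuncBelow (tbndList ts) t
  | [], u, hu => absurd hu (List.not_mem_nil (a := u))
  | t :: ts, u, hu => by
      rw [tbndList]
      cases hu with
      | head => exact tfb_mono (le_max_left _ _) (tbnd_below t)
      | tail _ h => exact tfb_mono (le_max_right _ _) (tbndList_below ts u h)
end

theorem ffb_mono {m n : ℕ} (h : m ≤ n) : ∀ {A : Fml}, A.FuncBelow m → A.FuncBelow n := by
  intro A
  induction A with
  | bot => intro; trivial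
  | top => intro; trivial
  | rel r ts => intro hA; exact fun t ht => tfb_mono h (hA t ht)
  | and A B ihA ihB => intro hA; exact ⟨ihA hA.1, ihB hA.2⟩
  | or A B ihA ihB => intro hA; exact ⟨ihA hA.1, ihB hA.2⟩
  | imp A B ihA ihB => intro hA; exact ⟨ihA hA.1, ihB hA.2⟩
  | all y A ih => intro hA; exact ih hA
  | ex y A ih => intro hA; exact ih hA

theorem fbnd_below : ∀ A : Fml, A.FuncBelow (fbnd A) := by
  intro A
  induction A with
  | bot => trivial
  | top => trivial
  | rel r ts => exact fun t ht => tbndList_below ts t ht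
  | and A B ihA ihB => exact ⟨ffb_mono (le_max_left _ _) ihA, ffb_mono (le_max_right _ _) ihB⟩
  | or A B ihA ihB => exact ⟨ffb_mono (le_max_left _ _) ihA, ffb_mono (le_max_right _ _) ihB⟩
  | imp A B ihA ihB => exact ⟨ffb_mono (le_max_left _ _) ihA, ffb_mono (le_max_right _ _) ihB⟩
  | all y A ih => exact ih
  | ex y A ih => exact ih

/-! ### Derived rules of `IQC` -/

variable {L : Set Fml}

theorem dcomp {A B C : Fml} (h1 : Deriv L (.imp A B)) (h2 : Deriv L (.imp B C)) :
    Deriv L (.imp A C) :=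
  Deriv.mp (Deriv.mp Deriv.impS (Deriv.mp Deriv.impK h2)) h1

theorem drefl {A : Fml} : Deriv L (.imp A A) :=
  Deriv.mp (Deriv.mp (Deriv.impS (A := A) (B := .imp A A) (C := A)) Deriv.impK) Deriv.impK

theorem dswap {A B C : Fml} (h : Deriv L (.imp A (.imp B C))) : Deriv L (.imp B (.imp A C)) :=
  dcomp Deriv.impK (Deriv.mp Deriv.impS h)

theorem dimp {P P' Q Q' : Fml} (hP : Deriv L (.imp P P')) (hQ : Deriv L (.imp Q' Q)) :
    Deriv L (.imp (.imp P' Q') (.imp P Q)) :=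
  dcomp (Deriv.mp Deriv.impS (Deriv.mp Deriv.impK hQ)) (dswap (dcomp hP (dswap drefl)))

theorem dor_mono {A A' B B' : Fml} (h1 : Deriv L (.imp A A')) (h2 : Deriv L (.imp B B')) :
    Deriv L (.imp (.or A B) (.or A' B')) :=
  Deriv.mp (Deriv.mp Deriv.orE (dcomp h1 Deriv.orI1)) (dcomp h2 Deriv.orI2)

theorem dand_mono {A A' B B' : Fml} (h1 : Deriv L (.imp A A')) (h2 : Deriv L (.imp B B')) :
    Deriv L (.imp (.and A B) (.and A' B')) :=
  Deriv.mp (Deriv.mp Deriv.impS (dcomp (dcomp Deriv.andE1 h1) Deriv.andI)) (dcomp Deriv.andE2 h2)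

theorem nf_all {x : ℕ} {A : Fml} : ¬ Fml.FreeIn x (.all x A) := by
  intro h; cases h with | all hne _ => exact hne rfl

theorem nf_ex {x : ℕ} {A : Fml} : ¬ Fml.FreeIn x (.ex x A) := by
  intro h; cases h with | ex hne _ => exact hne rfl

theorem dall_elim_self {x : ℕ} {A : Fml} : Deriv L (.imp (.all x A) A) := by
  have h := Deriv.allE (L := L) (x := x) (A := A) (.var x)
  rwa [fml_subst_self] at h

theorem dex_intro_self {x : ℕ} {A : Fml} : Deriv L (.imp A (.ex x A)) := by
  have h := Deriv.exI (L := L) (x := x) (A := A) (.var x)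
  rwa [fml_subst_self] at h

theorem dall_mono {x : ℕ} {A A' : Fml} (h : Deriv L (.imp A A')) :
    Deriv L (.imp (.all x A) (.all x A')) :=
  Deriv.mp (Deriv.allShift nf_all) (Deriv.gen (dcomp dall_elim_self h))

theorem dex_mono {x : ℕ} {A A' : Fml} (h : Deriv L (.imp A A')) :
    Deriv L (.imp (.ex x A) (.ex x A')) :=
  Deriv.mp (Deriv.exShift nf_ex) (Deriv.gen (dcomp h dex_intro_self))

theorem dsubst (x : ℕ) (t : Term) {C : Fml} (h : Deriv L C) : Deriv L (C.subst x t) :=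
  Deriv.mp (Deriv.allE t) (Deriv.gen h)

theorem dsubst_imp (x : ℕ) (t : Term) {P Q : Fml} (h : Deriv L (.imp P Q)) :
    Deriv L (.imp (P.subst x t) (Q.subst x t)) := by
  have h1 := dsubst x t h
  rwa [show (Fml.imp P Q).subst x t = .imp (P.subst x t) (Q.subst x t) from rfl] at h1

theorem allE_or {A B : Fml} {x : ℕ} (hB : ¬ Fml.FreeIn x B) (t : Term) :
    Deriv L (.imp (.all x (.or A B)) (.or (A.subst x t) B)) := by
  have h := Deriv.allE (L := L) (x := x) (A := .or A B) t
  rwa [show (Fml.or A B).subst x t = .or (A.subst x t) (B.subst x t) from rfl,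
    subst_notFree t hB] at h

theorem exI_imp {P Q : Fml} {x : ℕ} (t : Term) :
    Deriv L (.imp (.imp (P.subst x t) (Q.subst x t)) (.ex x (.imp P Q))) := by
  have h := Deriv.exI (L := L) (x := x) (A := .imp P Q) t
  rwa [show (Fml.imp P Q).subst x t = .imp (P.subst x t) (Q.subst x t) from rfl] at h

/-! ### Unfolding lemmas for `skAux` -/

theorem skAux_and {n : ℕ} {pos : Bool} {xs : List ℕ} {c : ℕ} {A B : Fml} :
    skAux (n + 1) pos xs c (.and A B) =
      (.and (skAux n pos xs c A).1 (skAux n pos xs (skAux n pos xs c A).2 B).1,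
        (skAux n pos xs (skAux n pos xs c A).2 B).2) := rfl

theorem skAux_or {n : ℕ} {pos : Bool} {xs : List ℕ} {c : ℕ} {A B : Fml} :
    skAux (n + 1) pos xs c (.or A B) =
      (.or (skAux n pos xs c A).1 (skAux n pos xs (skAux n pos xs c A).2 B).1,
        (skAux n pos xs (skAux n pos xs c A).2 B).2) := rfl

theorem skAux_imp {n : ℕ} {pos : Bool} {xs : List ℕ} {c : ℕ} {A B : Fml} :
    skAux (n + 1) pos xs c (.imp A B) =
      (.imp (skAux n (!pos) xs c A).1 (skAux n pos xs (skAux n (!pos) xs c A).2 B).1,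
        (skAux n pos xs (skAux n (!pos) xs c A).2 B).2) := rfl

theorem skAux_all_pos {n : ℕ} {xs : List ℕ} {c : ℕ} {y : ℕ} {A : Fml} :
    skAux (n + 1) true xs c (.all y A) =
      skAux n true xs (c + 1) (A.subst y (.func c (xs.map Term.var))) := rfl

theorem skAux_all_neg {n : ℕ} {xs : List ℕ} {c : ℕ} {y : ℕ} {A : Fml} :
    skAux (n + 1) false xs c (.all y A) =
      (.all y (skAux n false (xs ++ [y]) c A).1, (skAux n false (xs ++ [y]) c A).2) := rfl

theorem skAux_ex_pos {n : ℕ} {xs : List ℕ} {c : ℕ} {y : ℕ} {A : Fml} :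
    skAux (n + 1) true xs c (.ex y A) =
      (.ex y (skAux n true (xs ++ [y]) c A).1, (skAux n true (xs ++ [y]) c A).2) := rfl

theorem skAux_ex_neg {n : ℕ} {xs : List ℕ} {c : ℕ} {y : ℕ} {A : Fml} :
    skAux (n + 1) false xs c (.ex y A) =
      skAux n false xs (c + 1) (A.subst y (.func c (xs.map Term.var))) := rfl

/-! ### Soundness: negative Skolemization implies the original formula;
the original formula implies its positive Skolemization. -/

theorem sk_sound : ∀ (n : ℕ) (A : Fml) (xs : List ℕ) (c : ℕ), A.size ≤ n →
    Deriv ∅ (.imp A (skAux n true xs c A).1) ∧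
    Deriv ∅ (.imp (skAux n false xs c A).1 A) := by
  intro n
  induction n with
  | zero => intro A xs c h; have := size_pos A; omega
  | succ n ih =>
    intro A xs c h
    cases A with
    | bot => exact ⟨drefl, drefl⟩
    | top => exact ⟨drefl, drefl⟩
    | rel r ts => exact ⟨drefl, drefl⟩
    | and A₁ A₂ =>
        simp only [Fml.size] at h
        have hs₁ := size_pos A₁; have hs₂ := size_pos A₂
        constructor
        · rw [skAux_and]
          exact dand_mono (ih A₁ xs c (by omega)).1 (ih A₂ xs _ (by omega)).1
        · rw [skAux_and]
          exact dand_mono (ih A₁ xs c (by omega)).2 (ih A₂ xs _ (by omega)).2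
    | or A₁ A₂ =>
        simp only [Fml.size] at h
        have hs₁ := size_pos A₁; have hs₂ := size_pos A₂
        constructor
        · rw [skAux_or]
          exact dor_mono (ih A₁ xs c (by omega)).1 (ih A₂ xs _ (by omega)).1
        · rw [skAux_or]
          exact dor_mono (ih A₁ xs c (by omega)).2 (ih A₂ xs _ (by omega)).2
    | imp A₁ A₂ =>
        simp only [Fml.size] at h
        have hs₁ := size_pos A₁; have hs₂ := size_pos A₂
        constructor
        · simp only [skAux_imp, Bool.not_true]
          exact dimp (ih A₁ xs c (by omega)).2 (ih A₂ xs _ (by omega)).1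
        · simp only [skAux_imp, Bool.not_false]
          exact dimp (ih A₁ xs c (by omega)).1 (ih A₂ xs _ (by omega)).2
    | all y A₁ =>
        simp only [Fml.size] at h
        constructor
        · rw [skAux_all_pos]
          exact dcomp (Deriv.allE _)
            ((ih (A₁.subst y (.func c (xs.map Term.var))) xs (c + 1)
              (by rw [size_subst]; omega)).1)
        · rw [skAux_all_neg]
          exact dall_mono (ih A₁ (xs ++ [y]) c (by omega)).2
    | ex y A₁ =>
        simp only [Fml.size] at h
        constructor
        · rw [skAux_ex_pos]
          exact dex_mono (ih A₁ (xs ++ [y]) c (by omega)).1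
        · rw [skAux_ex_neg]
          exact dcomp
            ((ih (A₁.subst y (.func c (xs.map Term.var))) xs (c + 1)
              (by rw [size_subst]; omega)).2)
            (Deriv.exI _)

/-! ### Universal closure and iterated substitution by fresh constants -/

def qclose (l : List ℕ) (A : Fml) : Fml := l.foldr .all A

theorem qclose_cons (y : ℕ) (ys : List ℕ) (A : Fml) :
    qclose (y :: ys) A = .all y (qclose ys A) := rfl

theorem qclose_size (l : List ℕ) (A : Fml) : (qclose l A).size = A.size + l.length := by
  induction l with
  | nil => simp [qclose]
  | cons y ys ih =>
      rw [qclose_cons, show (Fml.all y (qclose ys A)).size = (qclose ys A).size + 1 from rfl, ih]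
      simp; omega

theorem qclose_subst {y : ℕ} {ys : List ℕ} (hy : y ∉ ys) (t : Term) (A : Fml) :
    (qclose ys A).subst y t = qclose ys (A.subst y t) := by
  induction ys with
  | nil => rfl
  | cons z zs ih =>
      have hzy : z ≠ y := fun e => hy (e ▸ List.mem_cons_self (a := z) (l := zs))
      rw [qclose_cons, qclose_cons, Fml.subst, if_neg hzy,
        ih (fun hm => hy (List.mem_cons_of_mem _ hm))]

theorem freeIn_qclose : ∀ (l : List ℕ) {z : ℕ} {A : Fml},
    Fml.FreeIn z (qclose l A) → z ∉ l ∧ Fml.FreeIn z A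
  | [], z, A, h => ⟨List.not_mem_nil (a := z), h⟩
  | y :: ys, z, A, h => by
      rw [qclose_cons] at h
      cases h with
      | all hne h' =>
          obtain ⟨h1, h2⟩ := freeIn_qclose ys h'
          refine ⟨?_, h2⟩
          intro hm
          rcases List.mem_cons.mp hm with e | e
          · exact hne e.symm
          · exact h1 e

theorem deriv_qclose_elim : ∀ (l : List ℕ) {A : Fml}, Deriv L (qclose l A) → Deriv L A
  | [], A, h => h
  | y :: ys, A, h => by
      rw [qclose_cons] at h
      have h1 := Deriv.mp (Deriv.allE (.var y)) h
      rw [fml_subst_self] at h1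
      exact deriv_qclose_elim ys h1

def substAll : List ℕ → ℕ → Fml → Fml
  | [], _, A => A
  | y :: ys, c, A => substAll ys (c + 1) (A.subst y (.func c []))

theorem substAll_size : ∀ (l : List ℕ) (c : ℕ) (A : Fml), (substAll l c A).size = A.size
  | [], _, _ => rfl
  | y :: ys, c, A => by rw [substAll, substAll_size ys (c + 1) _, size_subst]

theorem skolemizeFrom_qclose : ∀ (l : List ℕ), l.Nodup → ∀ (c : ℕ) (A : Fml),
    skolemizeFrom c (qclose l A) = (skAux A.size true [] (c + l.length) (substAll l c A)).1
  | [], _, c, A => by simp [skolemizeFrom, qclose, substAll]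
  | y :: ys, h, c, A => by
      have hy : y ∉ ys := (List.nodup_cons.mp h).1
      have hys : ys.Nodup := (List.nodup_cons.mp h).2
      rw [skolemizeFrom, qclose_cons,
        show (Fml.all y (qclose ys A)).size = (qclose ys A).size + 1 from rfl,
        skAux_all_pos, List.map_nil, qclose_subst hy,
        show (qclose ys A).size = (qclose ys (A.subst y (.func c []))).size by
          rw [qclose_size, qclose_size, size_subst]]
      have ihe := skolemizeFrom_qclose ys hys (c + 1) (A.subst y (.func c []))
      rw [skolemizeFrom] at ihe
      rw [ihe, size_subst]
      rw [show c + 1 + ys.length = c + (y :: ys).length by simp; omega]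
      rfl

theorem substAll_imp : ∀ (l : List ℕ) (c : ℕ) (A B : Fml),
    substAll l c (.imp A B) = .imp (substAll l c A) (substAll l c B)
  | [], _, _, _ => rfl
  | y :: ys, c, A, B => by
      rw [substAll, show (Fml.imp A B).subst y (.func c []) =
        .imp (A.subst y (.func c [])) (B.subst y (.func c [])) from rfl,
        substAll_imp ys]
      rfl

theorem substAll_or : ∀ (l : List ℕ) (c : ℕ) (A B : Fml),
    substAll l c (.or A B) = .or (substAll l c A) (substAll l c B)
  | [], _, _, _ => rfl
  | y :: ys, c, A, B => by
      rw [substAll, show (Fml.or A B).subst y (.func c []) =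
        .or (A.subst y (.func c [])) (B.subst y (.func c [])) from rfl,
        substAll_or ys]
      rfl

theorem substAll_all {x : ℕ} : ∀ (l : List ℕ), (∀ y ∈ l, y ≠ x) → ∀ (c : ℕ) (A : Fml),
    substAll l c (.all x A) = .all x (substAll l c A)
  | [], _, _, _ => rfl
  | y :: ys, h, c, A => by
      rw [substAll, Fml.subst, if_neg (Ne.symm (h y (List.mem_cons_self (a := y) (l := ys)))),
        substAll_all ys (fun z hz => h z (List.mem_cons_of_mem _ hz))]
      rfl

theorem substAll_ex {x : ℕ} : ∀ (l : List ℕ), (∀ y ∈ l, y ≠ x) → ∀ (c : ℕ) (A : Fml),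
    substAll l c (.ex x A) = .ex x (substAll l c A)
  | [], _, _, _ => rfl
  | y :: ys, h, c, A => by
      rw [substAll, Fml.subst, if_neg (Ne.symm (h y (List.mem_cons_self (a := y) (l := ys)))),
        substAll_ex ys (fun z hz => h z (List.mem_cons_of_mem _ hz))]
      rfl

theorem hasVar_func_nil {x c : ℕ} : ¬ Term.HasVar x (.func c []) := by
  intro h
  cases h with
  | func hmem _ => exact absurd hmem List.not_mem_nil

theorem substAll_notFree {x : ℕ} : ∀ (l : List ℕ) (c : ℕ) {A : Fml},
    ¬ Fml.FreeIn x A → ¬ Fml.FreeIn x (substAll l c A)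
  | [], _, _, h => h
  | y :: ys, c, A, h => by
      rw [substAll]
      refine substAll_notFree ys (c + 1) ?_
      intro hf
      rcases freeIn_subst hf with h1 | h1
      · exact h h1
      · exact hasVar_func_nil h1

theorem dsubst_imp_nf {x : ℕ} (t : Term) {P Q : Fml} (hQ : ¬ Fml.FreeIn x Q)
    (h : Deriv L (.imp P Q)) : Deriv L (.imp (P.subst x t) Q) := by
  have h1 := dsubst_imp x t h
  rwa [subst_notFree t hQ] at h1

theorem dsubst_imp_nf' {x : ℕ} (t : Term) {P Q : Fml} (hP : ¬ Fml.FreeIn x P)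
    (h : Deriv L (.imp P Q)) : Deriv L (.imp P (Q.subst x t)) := by
  have h1 := dsubst_imp x t h
  rwa [subst_notFree t hP] at h1

theorem sk_CD {A B : Fml} {x : ℕ} (hB : ¬ Fml.FreeIn x B) (n c : ℕ)
    (h : (Fml.imp (.all x (.or A B)) (.or (.all x A) B)).size ≤ n) :
    Deriv ∅ (skAux n true [] c (Fml.imp (.all x (.or A B)) (.or (.all x A) B))).1 := by
  simp only [Fml.size] at h
  have hA := size_pos A; have hBp := size_pos B
  obtain ⟨m, rfl⟩ : ∃ m, n = m + 3 := ⟨n - 3, by omega⟩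
  simp only [skAux_imp, skAux_all_neg, skAux_all_pos, skAux_or, skAux_ex_pos, skAux_ex_neg,
    Bool.not_true, Bool.not_false, List.nil_append, List.map_nil]
  refine dcomp (dcomp
      (dall_mono (dor_mono (sk_sound m A [x] c ?_).2 (sk_sound m B [x] _ ?_).2))
      (allE_or hB _))
    (dor_mono (sk_sound m _ [] _ ?_).1 (sk_sound (m + 1) B [] _ ?_).1)
  · omega
  · omega
  · rw [size_subst]; omega
  · omega

theorem sk_ED {A B : Fml} {x : ℕ} (hB : ¬ Fml.FreeIn x B) (n c : ℕ)
    (h : (Fml.imp (.imp B (.ex x A)) (.ex x (.imp B A))).size ≤ n) :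
    Deriv ∅ (skAux n true [] c (Fml.imp (.imp B (.ex x A)) (.ex x (.imp B A)))).1 := by
  simp only [Fml.size] at h
  have hA := size_pos A; have hBp := size_pos B
  obtain ⟨m, rfl⟩ : ∃ m, n = m + 3 := ⟨n - 3, by omega⟩
  simp only [skAux_imp, skAux_all_neg, skAux_all_pos, skAux_or, skAux_ex_pos, skAux_ex_neg,
    Bool.not_true, Bool.not_false, List.nil_append, List.map_nil]
  refine dcomp (dimp
      (dcomp (dsubst_imp_nf _ hB ((sk_sound m B [x] _ ?_).2)) ((sk_sound (m + 1) B [] c ?_).1))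
      (dcomp ((sk_sound m _ [] _ ?_).2) (dsubst_imp x _ ((sk_sound m A [x] _ ?_).1))))
    (exI_imp _)
  · omega
  · omega
  · rw [size_subst]; omega
  · omega

theorem sk_SW {A B : Fml} {x : ℕ} (hB : ¬ Fml.FreeIn x B) (n c : ℕ)
    (h : (Fml.imp (.imp (.all x A) B) (.ex x (.imp A B))).size ≤ n) :
    Deriv ∅ (skAux n true [] c (Fml.imp (.imp (.all x A) B) (.ex x (.imp A B)))).1 := by
  simp only [Fml.size] at h
  have hA := size_pos A; have hBp := size_pos B
  obtain ⟨m, rfl⟩ : ∃ m, n = m + 3 := ⟨n - 3, by omega⟩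
  simp only [skAux_imp, skAux_all_neg, skAux_all_pos, skAux_or, skAux_ex_pos, skAux_ex_neg,
    Bool.not_true, Bool.not_false, List.nil_append, List.map_nil]
  refine dcomp (dimp
      (dcomp (dsubst_imp x _ ((sk_sound m A [x] _ ?_).2)) ((sk_sound m _ [] _ ?_).1))
      (dcomp ((sk_sound (m + 1) B [] _ ?_).2) (dsubst_imp_nf' _ hB ((sk_sound m B [x] _ ?_).1))))
    (exI_imp _)
  · omega
  · rw [size_subst]; omega
  · omega
  · omega

/-- The generic engine: if the Skolemization of every fresh-constant instance
of `F` is provable in `IQC`, then `F ∈ L`. -/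
theorem mem_of_sk (L : Set Fml) (hL : IsIntermediate L)
    (hSk : ∀ A : Fml, A.Closed → ∀ c : ℕ, Fml.FuncBelow c A →
      (A ∈ L ↔ skolemizeFrom c A ∈ L))
    {x : ℕ} {F : Fml} (hxF : ¬ Fml.FreeIn x F)
    (hprf : ∀ (l : List ℕ), (∀ y ∈ l, y ≠ x) → ∀ c c' : ℕ,
        Deriv ∅ (skAux F.size true [] c' (substAll l c F)).1) :
    F ∈ L := by
  set l := ((ffv F).filter (fun y => y ≠ x)).dedup with hldef
  have hnd : l.Nodup := List.nodup_dedup _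
  have hyx : ∀ y ∈ l, y ≠ x := by
    intro y hy
    have h1 := List.of_mem_filter (List.mem_dedup.mp hy)
    simpa using h1
  have hC : Fml.Closed (qclose l F) := by
    intro z hz
    obtain ⟨hnl, hzF⟩ := freeIn_qclose l hz
    by_cases e : z = x
    · exact hxF (e ▸ hzF)
    · exact hnl (List.mem_dedup.mpr (List.mem_filter.mpr ⟨ffv_sound hzF, by simpa using e⟩))
  have hiff := hSk _ hC (fbnd (qclose l F)) (fbnd_below _)
  have hmem : qclose l F ∈ L := by
    refine hiff.mpr (hL.1 _ ?_)
    rw [skolemizeFrom_qclose l hnd]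
    exact hprf l hyx _ _
  exact hL.2.2 _ (deriv_qclose_elim l (Deriv.ax hmem))

/-- If an intermediate first-order logic `L` admits
structural Skolemization (for every closed formula `A` and fresh choice of
Skolem symbols, `L ⊢ A` iff `L ⊢ A^S`), then `L` contains the quantifier
shift principles `CD`, `ED` and `SW`. -/
theorem quantifier_shifts_of_skolemization (L : Set Fml)
    (hL : IsIntermediate L)
    (hSk : ∀ A : Fml, A.Closed → ∀ c : ℕ, Fml.FuncBelow c A →
      (A ∈ L ↔ skolemizeFrom c A ∈ L)) :
    ∀ (A B : Fml) (x : ℕ), ¬ Fml.FreeIn x B →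
      (Fml.imp (.all x (.or A B)) (.or (.all x A) B) ∈ L ∧
       Fml.imp (.imp B (.ex x A)) (.ex x (.imp B A)) ∈ L ∧
       Fml.imp (.imp (.all x A) B) (.ex x (.imp A B)) ∈ L) := by
  intro A B x hB
  refine ⟨?_, ?_, ?_⟩
  · -- CD
    refine mem_of_sk L hL hSk (x := x) ?_ ?_
    · intro h
      apply hB
      cases h with
      | impL h1 => cases h1 with | all hne _ => exact absurd rfl hne
      | impR h1 =>
          cases h1 with
          | orL h2 => cases h2 with | all hne _ => exact absurd rfl hne
          | orR h2 => exact h2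
    · intro l hl c c'
      simp only [substAll_imp, substAll_or, substAll_all l hl]
      exact sk_CD (substAll_notFree l c hB) _ c'
        (le_of_eq (by simp [Fml.size, substAll_size]))
  · -- ED
    refine mem_of_sk L hL hSk (x := x) ?_ ?_
    · intro h
      apply hB
      cases h with
      | impL h1 =>
          cases h1 with
          | impL h2 => exact h2
          | impR h2 => cases h2 with | ex hne _ => exact absurd rfl hne
      | impR h1 => cases h1 with | ex hne _ => exact absurd rfl hne
    · intro l hl c c'
      simp only [substAll_imp, substAll_ex l hl]
      exact sk_ED (substAll_notFree l c hB) _ c'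
        (le_of_eq (by simp [Fml.size, substAll_size]))
  · -- SW
    refine mem_of_sk L hL hSk (x := x) ?_ ?_
    · intro h
      apply hB
      cases h with
      | impL h1 =>
          cases h1 with
          | impL h2 => cases h2 with | all hne _ => exact absurd rfl hne
          | impR h2 => exact h2
      | impR h1 => cases h1 with | ex hne _ => exact absurd rfl hne
    · intro l hl c c'
      simp only [substAll_imp, substAll_ex l hl, substAll_all l hl]
      exact sk_SW (substAll_notFree l c hB) _ c'
        (le_of_eq (by simp [Fml.size, substAll_size]))
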